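/- If f is a monic integer polynomial of degree n ≥ 1 with Mahler measure M(f) = 1, then every root of f is either zero or a root of unity. -/

import Mathlib

open Polynomial IntermediateField in
private theorem mahler_aux {s : Multiset ℝ} (h : ∀ a ∈ s, 1 ≤ a) :
    ∀ a ∈ s, a ≤ s.prod := by
  induction s using Multiset.induction with
  | empty => intro a ha; simp at ha
  | cons b s ih =>
    intro a ha
    have hb : 1 ≤ b := h b (Multiset.mem_cons_self b s)
    have hs : ∀ a ∈ s, 1 ≤ a := fun a ha => h a (Multiset.mem_cons_of_mem ha)
    have hsp : 1 ≤ s.prod := Multiset.one_le_prod hs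
    rw [Multiset.prod_cons]
    rcases Multiset.mem_cons.1 ha with rfl | ha
    · exact le_mul_of_one_le_right (le_trans zero_le_one hb) hsp
    · calc a ≤ s.prod := ih hs a ha
        _ = 1 * s.prod := (one_mul _).symm
        _ ≤ b * s.prod := by
          exact mul_le_mul_of_nonneg_right hb (le_trans zero_le_one hsp)

open Polynomial IntermediateField

/-- Kronecker's theorem: a monic integer polynomial of degree `≥ 1` with Mahler
measure `∏ max(|r_j|,1)` equal to `1` has every root zero or a root of unity. -/
theorem kronecker_of_mahler_eq_one (f : Polynomial ℤ) (hm : f.Monic)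
    (hdeg : 1 ≤ f.natDegree)
    (h1 : ((f.map (Int.castRingHom ℂ)).roots.map fun r => max (‖r‖) 1).prod = 1) :
    ∀ r ∈ (f.map (Int.castRingHom ℂ)).roots, r = 0 ∨ ∃ n : ℕ, 0 < n ∧ r ^ n = 1 := by
  -- every root has absolute value at most 1
  have habs : ∀ r ∈ (f.map (Int.castRingHom ℂ)).roots, ‖r‖ ≤ 1 := by
    intro r hr
    have h1le : ∀ a ∈ ((f.map (Int.castRingHom ℂ)).roots.map
        fun r => max (‖r‖) 1), (1:ℝ) ≤ a := by
      intro a ha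
      obtain ⟨s, _, rfl⟩ := Multiset.mem_map.1 ha
      exact le_max_right _ _
    have := mahler_aux h1le (max (‖r‖) 1)
      (Multiset.mem_map_of_mem _ hr)
    rw [h1] at this
    exact le_trans (le_max_left _ _) this
  intro x hx
  by_cases hx0 : x = 0
  · exact Or.inl hx0
  right
  have hfm0 : f.map (Int.castRingHom ℂ) ≠ 0 := (hm.map _).ne_zero
  have hroot : IsRoot (f.map (Int.castRingHom ℂ)) x := (mem_roots hfm0).1 hx
  -- x is integral over ℤ
  have hxi : IsIntegral ℤ x := ⟨f, hm, by rwa [← eval_map]⟩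
  have hxQ : IsIntegral ℚ x := hxi.tower_top
  -- the number field ℚ(x)
  let K : IntermediateField ℚ ℂ := ℚ⟮x⟯
  haveI : FiniteDimensional ℚ K := IntermediateField.adjoin.finiteDimensional hxQ
  haveI : NumberField K := ⟨⟩
  set y : K := ⟨x, IntermediateField.mem_adjoin_simple_self ℚ x⟩ with hy
  have hyx : algebraMap K ℂ y = x := rfl
  have hinj : Function.Injective (algebraMap K ℂ) := (algebraMap K ℂ).injective
  have hyi : IsIntegral ℤ y := by
    rw [← isIntegral_algebraMap_iff hinj (A := K) (B := ℂ)]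
    rwa [hyx]
  have hy0 : y ≠ 0 := by
    intro h
    apply hx0
    rw [← hyx, h, map_zero]
  -- y is a root of f over K
  have hyroot : aeval y f = 0 := by
    apply hinj
    rw [map_zero, ← Polynomial.aeval_algebraMap_apply, hyx]
    rw [aeval_def, ← eval_map]
    exact hroot
    
  -- every embedding sends y to a root of f, hence to something of norm ≤ 1
  have hnorm : ∀ φ : K →+* ℂ, ‖φ y‖ ≤ 1 := by
    intro φ
    apply habs
    rw [mem_roots hfm0]
    have : φ (aeval y f) = 0 := by rw [hyroot, map_zero]
    rw [aeval_def, hom_eval₂] at this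
    have hcomp : φ.comp (algebraMap ℤ K) = Int.castRingHom ℂ := by
      ext1
      simp
    rw [hcomp] at this
    rwa [IsRoot, eval_map]
  -- the powers of y land in a finite set
  obtain ⟨a, -, b, -, habne, h⟩ :=
    Set.Infinite.exists_ne_map_eq_of_mapsTo (f := (y ^ · : ℕ → K)) Set.infinite_univ
      (fun n _ => Set.mem_setOf.2 ⟨hyi.pow n, fun φ => by
        rw [map_pow, norm_pow]
        exact pow_le_one₀ (norm_nonneg _) (hnorm φ)⟩)
      (NumberField.Embeddings.finite_of_norm_le K ℂ (1 : ℝ))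
  -- derive a root of unity
  rcases Ne.lt_or_gt habne with hlt | hlt
  · refine ⟨b - a, Nat.sub_pos_of_lt hlt, ?_⟩
    have : y ^ (b - a) = 1 := by
      have h' : y ^ a * y ^ (b - a) = y ^ a * 1 := by
        rw [mul_one, ← pow_add, Nat.add_sub_cancel' hlt.le, h]
      exact mul_left_cancel₀ (pow_ne_zero a hy0) h'
    calc x ^ (b - a) = algebraMap K ℂ (y ^ (b - a)) := by rw [map_pow, hyx]
      _ = 1 := by rw [this, map_one]
  · refine ⟨a - b, Nat.sub_pos_of_lt hlt, ?_⟩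
    have : y ^ (a - b) = 1 := by
      have h' : y ^ b * y ^ (a - b) = y ^ b * 1 := by
        rw [mul_one, ← pow_add, Nat.add_sub_cancel' hlt.le, h]
      exact mul_left_cancel₀ (pow_ne_zero b hy0) h'
    calc x ^ (a - b) = algebraMap K ℂ (y ^ (a - b)) := by rw [map_pow, hyx]
      _ = 1 := by rw [this, map_one]
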